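/- Let A : Fin k → (Fin m → ℤ) be a family of lattice vectors, and let φ : MvPolynomial (Fin k) ℂ → AddMonoidAlgebra ℂ (Fin m → ℤ) be the ℂ-algebra homomorphism determined by sending the variable Xᵢ to the Laurent monomial AddMonoidAlgebra.single (A i) 1. Then the kernel of φ equals the ideal of MvPolynomial (Fin k) ℂ generated by the binomials X^α − X^β, taken over all α, β : Fin k →₀ ℕ such that ∑ᵢ (α i) • (A i) = ∑ᵢ (β i) • (A i) in Fin m → ℤ. -/

import Mathlib

open MvPolynomial

namespace ToricAux

variable {k m : ℕ}

noncomputable def w (A : Fin k → (Fin m → ℤ)) (α : Fin k →₀ ℕ) : Fin m → ℤ :=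
  ∑ i, α i • A i

lemma aeval_monomial_one (A : Fin k → (Fin m → ℤ)) (α : Fin k →₀ ℕ) :
    aeval (fun i => AddMonoidAlgebra.single (A i) (1 : ℂ)) (monomial α (1:ℂ)) =
      AddMonoidAlgebra.single (w A α) 1 := by
  classical
  rw [aeval_monomial, map_one, one_mul, Finsupp.prod_pow]
  have h : ∀ s : Finset (Fin k),
      ∏ i ∈ s, AddMonoidAlgebra.single (A i) (1:ℂ) ^ α i =
        AddMonoidAlgebra.single (∑ i ∈ s, α i • A i) 1 := by
    intro s
    induction s using Finset.induction with
    | empty => simp [AddMonoidAlgebra.one_def]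
    | insert _ _ h ih =>
        rw [Finset.prod_insert h, ih, AddMonoidAlgebra.single_pow,
          AddMonoidAlgebra.single_mul_single, Finset.sum_insert h]
        simp
  simpa [w] using h Finset.univ

lemma aeval_monomial_c (A : Fin k → (Fin m → ℤ)) (α : Fin k →₀ ℕ) (c : ℂ) :
    aeval (fun i => AddMonoidAlgebra.single (A i) (1 : ℂ)) (monomial α c) =
      AddMonoidAlgebra.single (w A α) c := by
  have h : monomial α c = c • monomial α (1:ℂ) := by
    rw [smul_monomial, smul_eq_mul, mul_one]
  rw [h, map_smul, aeval_monomial_one]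
  rw [AddMonoidAlgebra.smul_single', mul_one]

end ToricAux

/-- Proposition 3.3: the kernel of the monomial map sending `X i` to the Laurent
monomial with exponent `A i` is generated by the binomials `X^α - X^β` with
`∑ i, α i • A i = ∑ i, β i • A i`. -/
theorem toric_ideal_generated_by_binomials
    (k m : ℕ) (A : Fin k → (Fin m → ℤ)) :
    RingHom.ker (MvPolynomial.aeval
        (fun i => AddMonoidAlgebra.single (A i) (1 : ℂ)) :
        MvPolynomial (Fin k) ℂ →ₐ[ℂ] AddMonoidAlgebra ℂ (Fin m → ℤ)) =
      Ideal.span {p : MvPolynomial (Fin k) ℂ |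
        ∃ α β : Fin k →₀ ℕ,
          (∑ i, (α i) • A i) = (∑ i, (β i) • A i) ∧
          p = MvPolynomial.monomial α (1 : ℂ) - MvPolynomial.monomial β (1 : ℂ)} := by
  classical
  set φ := (MvPolynomial.aeval
        (fun i => AddMonoidAlgebra.single (A i) (1 : ℂ)) :
        MvPolynomial (Fin k) ℂ →ₐ[ℂ] AddMonoidAlgebra ℂ (Fin m → ℤ)) with hφ
  set S : Set (MvPolynomial (Fin k) ℂ) := {p : MvPolynomial (Fin k) ℂ |
        ∃ α β : Fin k →₀ ℕ,
          (∑ i, (α i) • A i) = (∑ i, (β i) • A i) ∧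
          p = MvPolynomial.monomial α (1 : ℂ) - MvPolynomial.monomial β (1 : ℂ)} with hS
  apply le_antisymm
  · -- hard direction by strong induction on support size
    have key : ∀ n (p : MvPolynomial (Fin k) ℂ), p.support.card ≤ n →
        φ p = 0 → p ∈ Ideal.span S := by
      intro n
      induction n with
      | zero =>
          intro p hcard _
          have : p = 0 := by
            rw [← MvPolynomial.support_eq_empty]
            exact Finset.card_eq_zero.mp (Nat.le_zero.mp hcard)
          simp [this]
      | succ n ih =>
          intro p hcard hker
          by_cases hp : p = 0
          · simp [hp]
          obtain ⟨α, hα⟩ := (MvPolynomial.support_nonempty.mpr hp).exists_mem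
          -- expand φ p as a sum of singles
          have h1 : φ p = ∑ v ∈ p.support,
              AddMonoidAlgebra.single (ToricAux.w A v) (MvPolynomial.coeff v p) := by
            conv_lhs => rw [p.as_sum]
            rw [map_sum]
            exact Finset.sum_congr rfl fun v _ => ToricAux.aeval_monomial_c A v _
          have h0 : (∑ v ∈ p.support,
              Finsupp.single (ToricAux.w A v) (MvPolynomial.coeff v p)
                : (Fin m → ℤ) →₀ ℂ) = 0 := by
            have hc0 := congrArg AddMonoidAlgebra.coeff (h1.symm.trans hker)
            rw [AddMonoidAlgebra.coeff_sum] at hc0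
            exact hc0
          have h2 := DFunLike.congr_fun h0 (ToricAux.w A α)
          rw [Finsupp.finset_sum_apply] at h2
          simp only [Finsupp.single_apply, Finsupp.coe_zero, Pi.zero_apply] at h2
          rw [← Finset.sum_filter] at h2
          -- find β ≠ α in the fiber
          set t := p.support.filter (fun v => ToricAux.w A v = ToricAux.w A α) with ht
          have hαt : α ∈ t := Finset.mem_filter.mpr ⟨hα, rfl⟩
          have hβ : ∃ β ∈ t, β ≠ α := by
            by_contra hcon
            push_neg at hcon
            have : t = {α} := Finset.eq_singleton_iff_unique_mem.mpr ⟨hαt, hcon⟩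
            rw [this, Finset.sum_singleton] at h2
            exact (MvPolynomial.mem_support_iff.mp hα) h2
          obtain ⟨β, hβt, hβα⟩ := hβ
          obtain ⟨hβp, hwβ⟩ := Finset.mem_filter.mp hβt
          set c := MvPolynomial.coeff α p with hc
          set b := (MvPolynomial.monomial α (1:ℂ) - MvPolynomial.monomial β (1:ℂ)) with hb
          have hbS : b ∈ S := ⟨α, β, hwβ.symm, rfl⟩
          set q := p - MvPolynomial.C c * b with hq
          have hφb : φ b = 0 := by
            rw [hb, map_sub, ToricAux.aeval_monomial_one, ToricAux.aeval_monomial_one, hwβ,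
              sub_self]
          have hφq : φ q = 0 := by
            rw [hq, map_sub, map_mul, hφb, mul_zero, sub_zero, hker]
          -- support of q shrinks
          have hsub : q.support ⊆ p.support.erase α := by
            intro γ hγ
            have hγ0 : MvPolynomial.coeff γ q ≠ 0 := MvPolynomial.mem_support_iff.mp hγ
            have hcoeff : MvPolynomial.coeff γ q = MvPolynomial.coeff γ p
                - c * ((if α = γ then (1:ℂ) else 0) - (if β = γ then (1:ℂ) else 0)) := by
              rw [hq, hb]
              simp [MvPolynomial.coeff_sub, MvPolynomial.coeff_C_mul,
                MvPolynomial.coeff_monomial, mul_sub]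
            by_cases hγα : γ = α
            · exfalso
              apply hγ0
              rw [hcoeff, hγα]
              simp [if_pos rfl, if_neg hβα, hc]
            · refine Finset.mem_erase.mpr ⟨fun h => hγα h, ?_⟩
              by_contra hγp
              apply hγ0
              have hγβ : γ ≠ β := fun h => hγp (h ▸ hβp)
              have : MvPolynomial.coeff γ p = 0 := MvPolynomial.notMem_support_iff.mp hγp
              rw [hcoeff, this, if_neg (fun h => hγα h.symm), if_neg (fun h => hγβ h.symm)]
              ring
          have hcard' : q.support.card ≤ n := by
            have h3 : (p.support.erase α).card < p.support.card :=
              Finset.card_erase_lt_of_mem hα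
            have := Finset.card_le_card hsub
            omega
          have hqI := ih q hcard' hφq
          have : p = q + MvPolynomial.C c * b := by rw [hq]; ring
          rw [this]
          exact Ideal.add_mem _ hqI (Ideal.mul_mem_left _ _ (Ideal.subset_span hbS))
    intro p hp
    exact key p.support.card p le_rfl (RingHom.mem_ker.mp hp)
  · rw [Ideal.span_le]
    rintro p ⟨α, β, hαβ, rfl⟩
    rw [SetLike.mem_coe, RingHom.mem_ker, map_sub, ToricAux.aeval_monomial_one,
      ToricAux.aeval_monomial_one]
    rw [show ToricAux.w A α = ToricAux.w A β from hαβ, sub_self]
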